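/- Let u ∈ H with ‖u‖₀ = 1 and λ(u) ≤ λ₂, and let v ∈ H with u − v ≠ 0 satisfy ‖v‖² ≤ λ₁/4 in the energy norm. Set u' = (u − v)/‖u − v‖₀. Then ‖u − u'‖ ≤ 2(1 + (λ₂/λ₁)^{1/2})‖v‖. -/
import Mathlib


open scoped RealInnerProductSpace

/-- The Rayleigh quotient `λ(u) = a(u,u)/(u,u)`, where `a = ⟪·,·⟫` is the inner product of the
Hilbert space `H` (inducing the energy norm `‖·‖`) and `b` is the second inner product `(·,·)`
(inducing the weaker norm `‖·‖₀ = √(b u u)`). Note `⟪u,u⟫ = ‖u‖²`. -/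
noncomputable def rayleigh {H : Type*} [NormedAddCommGroup H] [InnerProductSpace ℝ H]
    (b : LinearMap.BilinForm ℝ H) (u : H) : ℝ :=
  ‖u‖ ^ 2 / b u u

section Aux

variable {H : Type*} [NormedAddCommGroup H] [InnerProductSpace ℝ H]
  (b : LinearMap.BilinForm ℝ H)

lemma bilin_expand2 (x y : H) (p q : ℝ) :
    b (p • x + q • y) (p • x + q • y)
      = p * p * b x x + p * q * b x y + q * p * b y x + q * q * b y y := by
  simp only [map_add, LinearMap.add_apply, LinearMap.map_smul₂, map_smul,
    LinearMap.smul_apply, smul_eq_mul]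
  ring

lemma bilin_nonneg (hb_pos : ∀ x : H, x ≠ 0 → 0 < b x x) (x : H) : 0 ≤ b x x := by
  rcases eq_or_ne x 0 with rfl | h
  · simp
  · exact (hb_pos x h).le

lemma bilin_cs (hb_symm : ∀ x y : H, b x y = b y x)
    (hb_pos : ∀ x : H, x ≠ 0 → 0 < b x x) (x y : H) :
    b x y ^ 2 ≤ b x x * b y y := by
  rcases eq_or_ne y 0 with rfl | hy
  · simp
  have hyy : 0 < b y y := hb_pos y hy
  have h := bilin_nonneg b hb_pos ((b y y) • x + (-(b x y)) • y)
  rw [bilin_expand2, hb_symm y x] at h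
  nlinarith [h, hyy]

/-- triangle inequality for the b-norm -/
lemma bilin_tri (hb_symm : ∀ x y : H, b x y = b y x)
    (hb_pos : ∀ x : H, x ≠ 0 → 0 < b x x) (x y : H) :
    Real.sqrt (b (x + y) (x + y)) ≤ Real.sqrt (b x x) + Real.sqrt (b y y) := by
  have hx := bilin_nonneg b hb_pos x
  have hy := bilin_nonneg b hb_pos y
  have hcs := bilin_cs b hb_symm hb_pos x y
  have hxy : b x y ≤ Real.sqrt (b x x) * Real.sqrt (b y y) := by
    have h1 : b x y ≤ |b x y| := le_abs_self _
    rw [← Real.sqrt_sq_eq_abs] at h1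
    refine h1.trans ?_
    rw [← Real.sqrt_mul hx]
    exact Real.sqrt_le_sqrt hcs
  have hexp : b (x + y) (x + y) = b x x + 2 * b x y + b y y := by
    have := bilin_expand2 b x y 1 1
    simp only [one_smul, one_mul] at this
    rw [this, hb_symm y x]; ring
  have h3 : b (x + y) (x + y) ≤ (Real.sqrt (b x x) + Real.sqrt (b y y)) ^ 2 := by
    rw [hexp]
    have sx : Real.sqrt (b x x) ^ 2 = b x x := Real.sq_sqrt hx
    have sy : Real.sqrt (b y y) ^ 2 = b y y := Real.sq_sqrt hy
    nlinarith [hxy]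
  calc Real.sqrt (b (x + y) (x + y)) ≤ Real.sqrt ((Real.sqrt (b x x) + Real.sqrt (b y y)) ^ 2) :=
        Real.sqrt_le_sqrt h3
    _ = Real.sqrt (b x x) + Real.sqrt (b y y) := by
        rw [Real.sqrt_sq (by positivity)]

end Aux

/-- if `‖v‖² ≤ λ₁/4` then `‖u − u'‖ ≤ 2(1 + √(λ₂/λ₁))‖v‖`. -/
theorem iterate_distance_bound {H : Type*} [NormedAddCommGroup H] [InnerProductSpace ℝ H] [CompleteSpace H]
    (b : LinearMap.BilinForm ℝ H)
    (hb_symm : ∀ x y : H, b x y = b y x)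
    (hb_pos : ∀ x : H, x ≠ 0 → 0 < b x x)
    (lam1 : ℝ) (hlam1 : 0 < lam1)
    (hmin : ∀ x : H, x ≠ 0 → lam1 ≤ rayleigh b x)
    (lam2 : ℝ) (hlam12 : lam1 < lam2)
    (u v : H) (hu : b u u = 1) (hle : rayleigh b u ≤ lam2)
    (huv : u - v ≠ 0) (hv : ‖v‖ ^ 2 ≤ lam1 / 4) :
    ‖u - (Real.sqrt (b (u - v) (u - v)))⁻¹ • (u - v)‖ ≤ 2 * (1 + Real.sqrt (lam2 / lam1)) * ‖v‖ := by
  have hlam2 : 0 < lam2 := hlam1.trans hlam12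
  have hmin' : ∀ x : H, lam1 * b x x ≤ ‖x‖ ^ 2 := by
    intro x
    rcases eq_or_ne x 0 with rfl | hx
    · simp
    · have h := hmin x hx
      rw [rayleigh, le_div_iff₀ (hb_pos x hx)] at h
      linarith
  set s := Real.sqrt (b (u - v) (u - v)) with hs
  set t := Real.sqrt (b v v) with ht
  have ht0 : 0 ≤ t := Real.sqrt_nonneg _
  have hs0 : 0 < s := Real.sqrt_pos.mpr (hb_pos _ huv)
  have hv0 : 0 ≤ ‖v‖ := norm_nonneg v
  have hbv : t ^ 2 = b v v := Real.sq_sqrt (bilin_nonneg b hb_pos v)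
  have h1v : lam1 * b v v ≤ ‖v‖ ^ 2 := hmin' v
  have htv : t * Real.sqrt lam1 ≤ ‖v‖ := by
    have heq : t * Real.sqrt lam1 = Real.sqrt (b v v * lam1) :=
      (Real.sqrt_mul (bilin_nonneg b hb_pos v) lam1).symm
    rw [heq]
    calc Real.sqrt (b v v * lam1) ≤ Real.sqrt (‖v‖ ^ 2) :=
          Real.sqrt_le_sqrt (by linarith)
      _ = ‖v‖ := Real.sqrt_sq hv0
  have ht_half : t ≤ 1 / 2 := by
    have hbv4 : b v v ≤ 1 / 4 := by
      have := h1v.trans hv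
      nlinarith
    calc t ≤ Real.sqrt (1 / 4) := Real.sqrt_le_sqrt hbv4
      _ = 1 / 2 := by
          rw [show (1:ℝ)/4 = (1/2)^2 by norm_num, Real.sqrt_sq (by norm_num)]
  -- |s - 1| ≤ t
  have hs_lb : 1 - t ≤ s := by
    have e : u - v + v = u := by abel
    have h := bilin_tri b hb_symm hb_pos (u - v) v
    rw [e, hu, Real.sqrt_one] at h
    linarith
  have hs_ub : s ≤ 1 + t := by
    have e : u + -v = u - v := by abel
    have h := bilin_tri b hb_symm hb_pos u (-v)
    rw [e, hu, Real.sqrt_one] at h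
    have hnv : b (-v) (-v) = b v v := by simp
    rw [hnv] at h
    exact h
  have hs_half : 1 / 2 ≤ s := by linarith
  have hnu : ‖u‖ ≤ Real.sqrt lam2 := by
    have h := hle
    rw [rayleigh, hu, div_one] at h
    have := Real.sqrt_le_sqrt h
    rwa [Real.sqrt_sq (norm_nonneg u)] at this
  have key : u - s⁻¹ • (u - v) = v + (1 - s⁻¹) • (u - v) := by
    rw [sub_smul, one_smul]
    abel
  rw [key]
  have h1 : ‖v + (1 - s⁻¹) • (u - v)‖ ≤ ‖v‖ + |1 - s⁻¹| * ‖u - v‖ := by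
    calc ‖v + (1 - s⁻¹) • (u - v)‖ ≤ ‖v‖ + ‖(1 - s⁻¹) • (u - v)‖ := norm_add_le _ _
      _ = ‖v‖ + |1 - s⁻¹| * ‖u - v‖ := by rw [norm_smul, Real.norm_eq_abs]
  have habs : |1 - s⁻¹| ≤ 2 * t := by
    have h2 : 1 - s⁻¹ = (s - 1) / s := by field_simp
    rw [h2, abs_div, abs_of_pos hs0, div_le_iff₀ hs0]
    have h3 : |s - 1| ≤ t := abs_sub_le_iff.mpr ⟨by linarith, by linarith⟩
    nlinarith [h3, ht0, hs_half]
  have hnuv : ‖u - v‖ ≤ Real.sqrt lam2 + ‖v‖ := (norm_sub_le u v).trans (by linarith)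
  have h4 : |1 - s⁻¹| * ‖u - v‖ ≤ 2 * t * (Real.sqrt lam2 + ‖v‖) :=
    mul_le_mul habs hnuv (norm_nonneg _) (by positivity)
  have hsl1 : 0 < Real.sqrt lam1 := Real.sqrt_pos.mpr hlam1
  have h5 : 2 * t * Real.sqrt lam2 ≤ 2 * Real.sqrt (lam2 / lam1) * ‖v‖ := by
    rw [Real.sqrt_div hlam2.le]
    have heq : 2 * (Real.sqrt lam2 / Real.sqrt lam1) * ‖v‖
        = 2 * Real.sqrt lam2 * ‖v‖ / Real.sqrt lam1 := by ring
    rw [heq, le_div_iff₀ hsl1]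
    nlinarith [htv, Real.sqrt_nonneg lam2]
  have h6 : 2 * t * ‖v‖ ≤ ‖v‖ := by nlinarith
  calc ‖v + (1 - s⁻¹) • (u - v)‖ ≤ ‖v‖ + |1 - s⁻¹| * ‖u - v‖ := h1
    _ ≤ ‖v‖ + 2 * t * (Real.sqrt lam2 + ‖v‖) := by linarith
    _ = ‖v‖ + 2 * t * Real.sqrt lam2 + 2 * t * ‖v‖ := by ring
    _ ≤ ‖v‖ + 2 * Real.sqrt (lam2 / lam1) * ‖v‖ + ‖v‖ := by linarith
    _ = 2 * (1 + Real.sqrt (lam2 / lam1)) * ‖v‖ := by ring
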